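/- Let G be a graph with edge weights, M a matching, and suppose (C₁, C₂, P) is a bad blossom pair with respect to M. Then M is not a maximum weight fractional matching; more precisely, the fractional point obtained from the indicator vector of M by adding ε on edges of (C₁ ∪ C₂) \ M, subtracting ε on edges of (C₁ ∪ C₂) ∩ M, adding 2ε on P \ M and subtracting 2ε on P ∩ M (for small ε > 0) is feasible for the matching LP and has strictly larger weight than M. -/

import Mathlib

open Finset

/-- `M` is a matching in `G`: a set of edges of `G`, no two of which share a vertex. -/
def IsMatching {V : Type*} (G : SimpleGraph V) (M : Finset (Sym2 V)) : Prop :=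
  (↑M : Set (Sym2 V)) ⊆ G.edgeSet ∧
    ∀ e ∈ M, ∀ f ∈ M, e ≠ f → ∀ v : V, v ∈ e → v ∉ f

/-- Total weight of a matching. -/
def mWeight {V : Type*} (w : Sym2 V → ℝ) (M : Finset (Sym2 V)) : ℝ := ∑ e ∈ M, w e

/-- Feasibility for the matching LP relaxation. -/
def LPFeasible {V : Type*} [Fintype V] [DecidableEq V] (G : SimpleGraph V)
    [DecidableRel G.Adj] (x : Sym2 V → ℝ) : Prop :=
  (∀ e, 0 ≤ x e) ∧ (∀ e, e ∉ G.edgeSet → x e = 0) ∧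
    ∀ i : V, ∑ e ∈ G.edgeFinset.filter (fun e => i ∈ e), x e ≤ 1

/-- The LP objective value. -/
def LPval {V : Type*} [Fintype V] [DecidableEq V] (G : SimpleGraph V)
    [DecidableRel G.Adj] (w x : Sym2 V → ℝ) : ℝ :=
  ∑ e ∈ G.edgeFinset, w e * x e

/-- A list of edges alternates with respect to `M`: of any two consecutive entries,
exactly one lies in `M`. -/
def AltList {V : Type*} [DecidableEq V] (M : Finset (Sym2 V)) (l : List (Sym2 V)) : Prop :=
  ∀ i : ℕ, (h : i + 1 < l.length) →
    ((l[i]'(Nat.lt_of_succ_lt h)) ∈ M ↔ (l[i+1]'h) ∉ M)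

/-- Total weight of a list of edges. -/
def wsum {V : Type*} (w : Sym2 V → ℝ) (l : List (Sym2 V)) : ℝ := (l.map w).sum

/-- A blossom with respect to `M`, rooted at its base `b`: an odd cycle `C` with
`(|C| - 1)/2` edges in `M`, whose base `b` is saturated by no edge of `C ∩ M`. -/
def IsBlossom {V : Type*} [DecidableEq V] (G : SimpleGraph V) (M : Finset (Sym2 V))
    {b : V} (C : G.Walk b b) : Prop :=
  C.IsCycle ∧ Odd C.length ∧ 2 * (C.edges.filter (· ∈ M)).length + 1 = C.length ∧
    ∀ e ∈ C.edges, e ∈ M → b ∉ e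

/-- A stemmed blossom with respect to `M`: a blossom `C` with base `b` together with
an alternating path `P` (the stem) starting at `b` with an edge of `M`, such that
`M - (P ∩ M) + (P \ M)` is still a matching. -/
def IsStemmedBlossom {V : Type*} [DecidableEq V] (G : SimpleGraph V)
    (M : Finset (Sym2 V)) {b t : V} (C : G.Walk b b) (P : G.Walk b t) : Prop :=
  IsBlossom G M C ∧ P.IsPath ∧ AltList M P.edges ∧
    (∀ e, P.edges.head? = some e → e ∈ M) ∧
    IsMatching G ((M \ P.edges.toFinset) ∪ (P.edges.filter (· ∉ M)).toFinset)

/-- A stemmed blossom is bad if `w(C∩M) + 2w(P∩M) < w(C\M) + 2w(P\M)`. -/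
def BadStemmedBlossom {V : Type*} [DecidableEq V] {G : SimpleGraph V}
    (w : Sym2 V → ℝ) (M : Finset (Sym2 V)) {b t : V} (C : G.Walk b b)
    (P : G.Walk b t) : Prop :=
  wsum w (C.edges.filter (· ∈ M)) + 2 * wsum w (P.edges.filter (· ∈ M)) <
    wsum w (C.edges.filter (· ∉ M)) + 2 * wsum w (P.edges.filter (· ∉ M))

/-- A blossom pair: two blossoms joined by an alternating path between their bases,
beginning and ending with edges of `M`. -/
def IsBlossomPair {V : Type*} [DecidableEq V] (G : SimpleGraph V)
    (M : Finset (Sym2 V)) {b₁ b₂ : V} (C₁ : G.Walk b₁ b₁) (C₂ : G.Walk b₂ b₂)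
    (P : G.Walk b₁ b₂) : Prop :=
  IsBlossom G M C₁ ∧ IsBlossom G M C₂ ∧ P.IsPath ∧ AltList M P.edges ∧
    (∀ e, P.edges.head? = some e → e ∈ M) ∧
    (∀ e, P.edges.getLast? = some e → e ∈ M)

/-- A blossom pair is bad if
`w(C₁∩M) + w(C₂∩M) + 2w(P∩M) < w(C₁\M) + w(C₂\M) + 2w(P\M)`. -/
def BadBlossomPair {V : Type*} [DecidableEq V] {G : SimpleGraph V}
    (w : Sym2 V → ℝ) (M : Finset (Sym2 V)) {b₁ b₂ : V} (C₁ : G.Walk b₁ b₁)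
    (C₂ : G.Walk b₂ b₂) (P : G.Walk b₁ b₂) : Prop :=
  wsum w (C₁.edges.filter (· ∈ M)) + wsum w (C₂.edges.filter (· ∈ M)) +
      2 * wsum w (P.edges.filter (· ∈ M)) <
    wsum w (C₁.edges.filter (· ∉ M)) + wsum w (C₂.edges.filter (· ∉ M)) +
      2 * wsum w (P.edges.filter (· ∉ M))

namespace BBP

open SimpleGraph Walk List

variable {V : Type*} [DecidableEq V] {G : SimpleGraph V}

lemma support_getElem {u v : V} (p : G.Walk u v) (j : ℕ) (h : j < p.support.length) :
    p.support[j] = p.getVert j := by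
  induction p generalizing j with
  | nil =>
    simp only [Walk.support_nil, List.length_singleton] at h
    interval_cases j
    simp [Walk.getVert]
  | cons ha q ih =>
    cases j with
    | zero => simp
    | succ n =>
      simp only [Walk.support_cons, List.getElem_cons_succ, Walk.getVert_cons_succ]
      exact ih n (by simpa [Walk.support_cons] using h)

lemma edges_getElem {u v : V} (p : G.Walk u v) (j : ℕ) (h : j < p.edges.length) :
    p.edges[j] = s(p.getVert j, p.getVert (j+1)) := by
  induction p generalizing j with
  | nil => simp at h
  | cons ha q ih =>
    cases j with
    | zero => simp [Walk.edges_cons]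
    | succ n =>
      simp only [Walk.edges_cons, List.getElem_cons_succ, Walk.getVert_cons_succ]
      exact ih n (by simpa [Walk.edges_cons] using h)

lemma count_cons_eq (x a : α) [DecidableEq α] (l : List α) :
    List.count x (a :: l) = List.count x l + (if x = a then 1 else 0) := by
  by_cases h : x = a
  · subst h; simp [List.count_cons]
  · simp [List.count_cons, h, Ne.symm h]

lemma countP_edges_add {u v : V} (p : G.Walk u v) (x : V) :
    p.edges.countP (fun e => decide (x ∈ e)) + (if x = u then 1 else 0) +
      (if x = v then 1 else 0) = 2 * p.support.count x := by
  induction p with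
  | nil =>
    simp only [Walk.edges_nil, List.countP_nil, Walk.support_nil, List.count_nil,
      count_cons_eq]
    omega
  | @cons u w' v ha q ih =>
    have hne : u ≠ w' := ha.ne
    have hd : (if decide (x ∈ s(u, w')) = true then 1 else 0) =
        (if x = u then 1 else 0) + (if x = w' then 1 else 0) := by
      by_cases h1 : x = u
      · subst h1; simp [hne, Sym2.mem_iff]
      · by_cases h2 : x = w'
        · subst h2; simp [h1, Sym2.mem_iff]
        · simp [h1, h2, Sym2.mem_iff]
    simp only [Walk.edges_cons, Walk.support_cons, List.countP_cons, count_cons_eq, hd]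
    omega

lemma tail_length {u v : V} (p : G.Walk u v) : p.support.tail.length = p.length := by
  have := p.length_support
  cases h : p.support with
  | nil => exact absurd h p.support_ne_nil
  | cons a l => simp [h] at this ⊢; omega

lemma end_mem_tail {b : V} {c : G.Walk b b} (hc : c.IsCycle) : b ∈ c.support.tail := by
  cases c with
  | nil => exact (hc.ne_nil rfl).elim
  | cons h q => simpa using q.end_mem_support

lemma cycle_support_count {b : V} {c : G.Walk b b} (hc : c.IsCycle) {i : V}
    (hi : i ∈ c.support) : c.support.count i = if i = b then 2 else 1 := by
  have hnd : c.support.tail.Nodup := hc.support_nodup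
  rw [c.support_eq_cons, count_cons_eq]
  by_cases h : i = b
  · subst h
    rw [List.count_eq_one_of_mem hnd (end_mem_tail hc)]
    simp
  · have hmem : i ∈ c.support.tail := by
      rw [c.support_eq_cons] at hi
      rcases List.mem_cons.mp hi with h' | h'
      · exact absurd h' h
      · exact h'
    rw [List.count_eq_one_of_mem hnd hmem]
    simp [h]

lemma cycle_countP_edges {b : V} {c : G.Walk b b} (hc : c.IsCycle) {i : V}
    (hi : i ∈ c.support) : c.edges.countP (fun e => decide (i ∈ e)) = 2 := by
  have h := countP_edges_add c i
  rw [cycle_support_count hc hi] at h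
  by_cases hb : i = b
  · subst hb; simp at h; omega
  · simp [hb] at h; omega

lemma matching_countP_le_one {G : SimpleGraph V} {M : Finset (Sym2 V)}
    (hM : IsMatching G M) {l : List (Sym2 V)} (hl : l.Nodup) (i : V) :
    l.countP (fun e => decide (i ∈ e ∧ e ∈ M)) ≤ 1 := by
  rw [List.countP_eq_length_filter]
  by_contra hcon
  push_neg at hcon
  set l' := l.filter (fun e => decide (i ∈ e ∧ e ∈ M)) with hl'
  have hnd : l'.Nodup := hl.filter _
  have h0 : l'[0]'(by omega) ∈ l' := List.getElem_mem _
  have h1 : l'[1]'(by omega) ∈ l' := List.getElem_mem _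
  have hne : l'[0]'(by omega) ≠ l'[1]'(by omega) := by
    intro h
    have := (List.nodup_iff_injective_get.mp hnd)
      (show l'.get ⟨0, by omega⟩ = l'.get ⟨1, by omega⟩ from h)
    simp at this
  have p0 : i ∈ l'[0]'(by omega) ∧ l'[0]'(by omega) ∈ M := by
    have := List.of_mem_filter h0; simpa using this
  have p1 : i ∈ l'[1]'(by omega) ∧ l'[1]'(by omega) ∈ M := by
    have := List.of_mem_filter h1; simpa using this
  exact hM.2 _ p0.2 _ p1.2 hne i p0.1 p1.1

lemma cycle_M_count {G : SimpleGraph V} {M : Finset (Sym2 V)} (hM : IsMatching G M)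
    {b : V} {c : G.Walk b b} (hc : IsBlossom G M c) {i : V} (hi : i ∈ c.support)
    (hib : i ≠ b) :
    c.edges.countP (fun e => decide (i ∈ e ∧ e ∈ M)) = 1 := by
  obtain ⟨hcyc, hodd, hcount, hbase⟩ := hc
  have hnd : c.edges.Nodup := hcyc.edges_nodup
  have hndt : c.support.tail.Nodup := hcyc.support_nodup
  set k := (c.edges.filter (· ∈ M)).length with hk
  set SM : Finset (Sym2 V) := (c.edges.filter (· ∈ M)).toFinset with hSM
  set T : Finset V := c.support.tail.toFinset with hT
  have hSMcard : SM.card = k := by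
    rw [hSM, List.toFinset_card_of_nodup (hnd.filter _)]
  have hTcard : T.card = c.length := by
    rw [hT, List.toFinset_card_of_nodup hndt, tail_length]
  have hmemT : ∀ x ∈ c.support, x ∈ T := by
    intro x hx
    rw [c.support_eq_cons] at hx
    rcases List.mem_cons.mp hx with h' | h'
    · subst h'; exact List.mem_toFinset.mpr (end_mem_tail hcyc)
    · exact List.mem_toFinset.mpr h'
  have hSMedge : ∀ e ∈ SM, e ∈ c.edges ∧ e ∈ M := by
    intro e he
    have := List.mem_filter.mp (List.mem_toFinset.mp he)
    simpa using this
  set f : V → ℕ := fun v => (SM.filter (fun e => v ∈ e)).card with hf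
  have hsum : ∑ v ∈ T, f v = 2 * k := by
    have hcomm : ∑ v ∈ T, f v = ∑ e ∈ SM, (T.filter (fun v => v ∈ e)).card := by
      simp_rw [hf, Finset.card_filter]
      exact Finset.sum_comm
    rw [hcomm]
    have h2 : ∀ e ∈ SM, (T.filter (fun v => v ∈ e)).card = 2 := by
      intro e he
      induction e using Sym2.inductionOn with
      | hf x y =>
        obtain ⟨hce, heM⟩ := hSMedge _ he
        have hadj : G.Adj x y := c.edges_subset_edgeSet hce
        have hxy : x ≠ y := hadj.ne
        have hxs : x ∈ c.support := c.fst_mem_support_of_mem_edges hce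
        have hys : y ∈ c.support := c.snd_mem_support_of_mem_edges hce
        have heq : T.filter (fun v => v ∈ s(x,y)) = {x, y} := by
          ext z
          simp only [Finset.mem_filter, Sym2.mem_iff, Finset.mem_insert,
            Finset.mem_singleton]
          constructor
          · rintro ⟨-, h⟩; exact h
          · rintro (rfl | rfl)
            · exact ⟨hmemT _ hxs, Or.inl rfl⟩
            · exact ⟨hmemT _ hys, Or.inr rfl⟩
        rw [heq, Finset.card_insert_of_notMem (by simp [hxy]), Finset.card_singleton]
    rw [Finset.sum_congr rfl h2, Finset.sum_const, hSMcard, smul_eq_mul]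
    omega
  have hbound : ∀ v : V, f v ≤ 1 := by
    intro v
    apply Finset.card_le_one.mpr
    intro e1 h1 e2 h2
    simp only [Finset.mem_filter] at h1 h2
    by_contra hne
    exact hM.2 e1 (hSMedge _ h1.1).2 e2 (hSMedge _ h2.1).2 hne v h1.2 h2.2
  have hfb : f b = 0 := by
    rw [hf]
    simp only [Finset.card_eq_zero]
    apply Finset.filter_eq_empty_iff.mpr
    intro e he
    obtain ⟨hce, heM⟩ := hSMedge _ he
    exact hbase e hce heM
  have hbT : b ∈ T := hmemT b c.start_mem_support
  have hsum' : ∑ v ∈ T.erase b, f v = 2 * k := by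
    have := Finset.add_sum_erase T f hbT
    omega
  have hcarde : (T.erase b).card = 2 * k := by
    rw [Finset.card_erase_of_mem hbT, hTcard]
    omega
  have hiT : i ∈ T.erase b := Finset.mem_erase.mpr ⟨hib, hmemT i hi⟩
  have hone : 1 ≤ f i := by
    by_contra hcon
    push_neg at hcon
    have hfi : f i = 0 := by omega
    have hrest : ∑ v ∈ (T.erase b).erase i, f v = 2 * k := by
      have := Finset.add_sum_erase (T.erase b) f hiT
      omega
    have hle : ∑ v ∈ (T.erase b).erase i, f v ≤ ((T.erase b).erase i).card * 1 := by
      apply Finset.sum_le_card_nsmul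
      intro v _
      exact hbound v
    rw [Finset.card_erase_of_mem hiT, hcarde] at hle
    have hkpos : 1 ≤ 2 * k := by
      have := Finset.card_pos.mpr ⟨i, hiT⟩
      omega
    omega
  have hfi : f i = 1 := le_antisymm (hbound i) hone
  -- convert countP to f i
  rw [← hfi]
  show _ = (SM.filter (fun e => i ∈ e)).card
  have hfilt : SM.filter (fun e => i ∈ e) =
      ((c.edges.filter (· ∈ M)).filter (fun e => i ∈ e)).toFinset := by
    rw [hSM]
    ext e
    simp only [Finset.mem_filter, List.mem_toFinset, List.mem_filter,
      decide_eq_true_eq]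
  rw [hfilt, List.toFinset_card_of_nodup ((hnd.filter _).filter _),
    ← List.countP_eq_length_filter, List.countP_filter]
  apply List.countP_congr
  intro e _
  simp [and_comm]

lemma mem_support_of_mem_edges' {u v : V} (p : G.Walk u v) {e : Sym2 V} {i : V}
    (he : e ∈ p.edges) (hi : i ∈ e) : i ∈ p.support := by
  induction e using Sym2.inductionOn with
  | hf x y =>
    rcases Sym2.mem_iff.mp hi with rfl | rfl
    · exact p.fst_mem_support_of_mem_edges he
    · exact p.snd_mem_support_of_mem_edges he

lemma countP_edges_zero {u v : V} (p : G.Walk u v) {i : V} (hi : i ∉ p.support) :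
    p.edges.countP (fun e => decide (i ∈ e)) = 0 := by
  rw [List.countP_eq_zero]
  intro e he
  simp only [decide_eq_true_eq]
  intro hmem
  exact hi (mem_support_of_mem_edges' p he hmem)

lemma countP_edges_zero_M {M : Finset (Sym2 V)} {u v : V} (p : G.Walk u v) {i : V}
    (hi : i ∉ p.support) :
    p.edges.countP (fun e => decide (i ∈ e ∧ e ∈ M)) = 0 := by
  rw [List.countP_eq_zero]
  intro e he
  simp only [decide_eq_true_eq, not_and]
  intro hmem
  exact absurd (mem_support_of_mem_edges' p he hmem) hi

lemma path_countP_edges {u v : V} {p : G.Walk u v} (hp : p.IsPath) {i : V}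
    (hi : i ∈ p.support) :
    p.edges.countP (fun e => decide (i ∈ e)) + (if i = u then 1 else 0) +
      (if i = v then 1 else 0) = 2 := by
  have h := countP_edges_add p i
  rw [List.count_eq_one_of_mem hp.support_nodup hi] at h
  omega

lemma altlist_getElem_M {M : Finset (Sym2 V)} {l : List (Sym2 V)} (hA : AltList M l)
    (hh : ∀ e, l.head? = some e → e ∈ M) {i : ℕ} (h : i < l.length) :
    l[i] ∈ M ↔ Even i := by
  induction i with
  | zero =>
    cases l with
    | nil => simp at h
    | cons a t =>
      simp only [List.getElem_cons_zero, Even.zero, iff_true]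
      exact hh a rfl
  | succ n ih =>
    have h1 := hA n h
    have h2 := ih (Nat.lt_of_succ_lt h)
    rw [Nat.even_add_one]
    tauto

lemma cycle_M_count_base {G : SimpleGraph V} {M : Finset (Sym2 V)}
    {b : V} {c : G.Walk b b} (hc : IsBlossom G M c) :
    c.edges.countP (fun e => decide (b ∈ e ∧ e ∈ M)) = 0 := by
  rw [List.countP_eq_zero]
  intro e he
  simp only [decide_eq_true_eq, not_and]
  intro hmem heM
  exact hc.2.2.2 e he heM hmem

lemma path_M_count_start {G : SimpleGraph V} {M : Finset (Sym2 V)}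
    (hM : IsMatching G M) {u v : V} {p : G.Walk u v} (hp : p.IsPath) (hne : u ≠ v)
    (hh : ∀ e, p.edges.head? = some e → e ∈ M) :
    p.edges.countP (fun e => decide (u ∈ e ∧ e ∈ M)) = 1 := by
  refine le_antisymm (matching_countP_le_one hM hp.edges_nodup u) ?_
  have hlen : 0 < p.edges.length := by
    rw [p.length_edges]
    by_contra hl
    push_neg at hl
    interval_cases h : p.length
    · exact hne (by simpa using p.eq_of_length_eq_zero h)
  have he0 : p.edges[0]'hlen = s(p.getVert 0, p.getVert 1) := edges_getElem p 0 hlen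
  have hM0 : p.edges[0]'hlen ∈ M := by
    apply hh
    rw [List.head?_eq_getElem?, List.getElem?_eq_getElem hlen]
  apply List.countP_pos_iff.mpr
  refine ⟨p.edges[0]'hlen, List.getElem_mem _, ?_⟩
  simp only [decide_eq_true_eq]
  exact ⟨by rw [he0, p.getVert_zero]; exact Sym2.mem_mk_left _ _, hM0⟩

lemma path_M_count_end {G : SimpleGraph V} {M : Finset (Sym2 V)}
    (hM : IsMatching G M) {u v : V} {p : G.Walk u v} (hp : p.IsPath) (hne : u ≠ v)
    (hl : ∀ e, p.edges.getLast? = some e → e ∈ M) :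
    p.edges.countP (fun e => decide (v ∈ e ∧ e ∈ M)) = 1 := by
  refine le_antisymm (matching_countP_le_one hM hp.edges_nodup v) ?_
  have hlen : 0 < p.edges.length := by
    rw [p.length_edges]
    by_contra hl'
    push_neg at hl'
    interval_cases h : p.length
    · exact hne (by simpa using p.eq_of_length_eq_zero h)
  have hidx : p.edges.length - 1 < p.edges.length := by omega
  have he0 : p.edges[p.edges.length - 1]'hidx
      = s(p.getVert (p.edges.length - 1), p.getVert (p.edges.length - 1 + 1)) :=
    edges_getElem p _ hidx
  have hv : p.getVert (p.edges.length - 1 + 1) = v := by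
    rw [p.length_edges]
    have : p.length - 1 + 1 = p.length := by rw [p.length_edges] at hlen; omega
    rw [this, p.getVert_length]
  have hML : p.edges[p.edges.length - 1]'hidx ∈ M := by
    apply hl
    rw [List.getLast?_eq_getElem?, List.getElem?_eq_getElem hidx]
  apply List.countP_pos_iff.mpr
  refine ⟨p.edges[p.edges.length - 1]'hidx, List.getElem_mem _, ?_⟩
  simp only [decide_eq_true_eq]
  refine ⟨?_, hML⟩
  rw [he0, hv]
  exact Sym2.mem_mk_right _ _

lemma path_M_count_internal {G : SimpleGraph V} {M : Finset (Sym2 V)}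
    (hM : IsMatching G M) {u v : V} {p : G.Walk u v} (hp : p.IsPath)
    (hA : AltList M p.edges) (hh : ∀ e, p.edges.head? = some e → e ∈ M) {i : V}
    (hi : i ∈ p.support) (hiu : i ≠ u) (hiv : i ≠ v) :
    p.edges.countP (fun e => decide (i ∈ e ∧ e ∈ M)) = 1 := by
  refine le_antisymm (matching_countP_le_one hM hp.edges_nodup i) ?_
  obtain ⟨j, hj, hij⟩ := List.mem_iff_getElem.mp hi
  rw [support_getElem] at hij
  have hlen := p.length_support
  have hj0 : j ≠ 0 := by
    rintro rfl
    rw [p.getVert_zero] at hij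
    exact hiu hij.symm
  have hjl : j < p.length := by
    rcases lt_or_eq_of_le (show j ≤ p.length by omega) with h | h
    · exact h
    · subst h
      rw [p.getVert_length] at hij
      exact absurd hij.symm hiv
  have helen : p.edges.length = p.length := p.length_edges
  apply List.countP_pos_iff.mpr
  rcases Nat.even_or_odd j with hj2 | hj2
  · refine ⟨p.edges[j]'(by omega), List.getElem_mem _, ?_⟩
    simp only [decide_eq_true_eq]
    constructor
    · rw [edges_getElem p j (by omega), ← hij]
      exact Sym2.mem_mk_left _ _
    · exact (altlist_getElem_M hA hh (by omega)).mpr hj2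
  · obtain ⟨m, rfl⟩ := hj2
    refine ⟨p.edges[2*m]'(by omega), List.getElem_mem _, ?_⟩
    simp only [decide_eq_true_eq]
    constructor
    · rw [edges_getElem p (2*m) (by omega), ← hij]
      exact Sym2.mem_mk_right _ _
    · exact (altlist_getElem_M hA hh (by omega)).mpr ⟨m, by ring⟩

lemma card_F_inter_list [Fintype V] {G : SimpleGraph V} [DecidableRel G.Adj]
    {l : List (Sym2 V)} (hnd : l.Nodup) (hsub : ∀ e ∈ l, e ∈ G.edgeSet) (i : V) :
    ((G.edgeFinset.filter (fun e => i ∈ e)).filter (fun e => e ∈ l)).card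
      = l.countP (fun e => decide (i ∈ e)) := by
  rw [List.countP_eq_length_filter, ← List.toFinset_card_of_nodup (hnd.filter _)]
  congr 1
  ext e
  simp only [Finset.mem_filter, List.mem_toFinset, List.mem_filter,
    SimpleGraph.mem_edgeFinset, decide_eq_true_eq]
  constructor
  · rintro ⟨⟨-, h2⟩, h3⟩; exact ⟨h3, h2⟩
  · rintro ⟨h1, h2⟩; exact ⟨⟨hsub e h1, h2⟩, h1⟩

lemma card_F_inter_list_M [Fintype V] {G : SimpleGraph V} [DecidableRel G.Adj]
    {M : Finset (Sym2 V)} {l : List (Sym2 V)} (hnd : l.Nodup)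
    (hsub : ∀ e ∈ l, e ∈ G.edgeSet) (i : V) :
    ((G.edgeFinset.filter (fun e => i ∈ e)).filter (fun e => e ∈ l ∧ e ∈ M)).card
      = l.countP (fun e => decide (i ∈ e ∧ e ∈ M)) := by
  rw [List.countP_eq_length_filter, ← List.toFinset_card_of_nodup (hnd.filter _)]
  congr 1
  ext e
  simp only [Finset.mem_filter, List.mem_toFinset, List.mem_filter,
    SimpleGraph.mem_edgeFinset, decide_eq_true_eq]
  constructor
  · rintro ⟨⟨-, h2⟩, h3, h4⟩; exact ⟨h3, h2, h4⟩
  · rintro ⟨h1, h2, h3⟩; exact ⟨⟨hsub e h1, h2⟩, h1, h3⟩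

lemma list_sum_split (w : Sym2 V → ℝ) (M : Finset (Sym2 V)) (a b : ℝ)
    (l : List (Sym2 V)) :
    (l.map (fun e => w e * (if e ∈ M then a else b))).sum
      = a * wsum w (l.filter (· ∈ M)) + b * wsum w (l.filter (· ∉ M)) := by
  induction l with
  | nil => simp [wsum]
  | cons e t ih =>
    by_cases h : e ∈ M <;>
      simp [wsum, h, List.filter_cons] at ih ⊢ <;> rw [ih] <;> ring

end BBP
/-- Let `(C₁, C₂, P)` be a bad blossom pair with respect to a
matching `M` (the two blossoms, the connecting alternating path `P` between the bases
and `M` pairwise overlapping only as prescribed).  Then `M` is not a maximum weight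
fractional matching: for small `ε > 0`, the point obtained from the indicator vector
of `M` by adding `ε` on `(C₁ ∪ C₂) \ M`, subtracting `ε` on `(C₁ ∪ C₂) ∩ M`, adding
`2ε` on `P \ M` and subtracting `2ε` on `P ∩ M` is feasible for the matching LP and
has strictly larger objective value than the indicator vector of `M`. -/
theorem bad_blossom_pair_perturbation {V : Type*} [Fintype V] [DecidableEq V]
    (G : SimpleGraph V) [DecidableRel G.Adj] (w : Sym2 V → ℝ)
    (M : Finset (Sym2 V)) (hM : IsMatching G M)
    {b₁ b₂ : V} (C₁ : G.Walk b₁ b₁) (C₂ : G.Walk b₂ b₂) (P : G.Walk b₁ b₂)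
    (hBP : IsBlossomPair G M C₁ C₂ P) (hbad : BadBlossomPair w M C₁ C₂ P)
    (hdisj : ∀ v : V, v ∈ C₁.support → v ∉ C₂.support)
    (hPC₁ : ∀ v ∈ P.support, v ∈ C₁.support → v = b₁)
    (hPC₂ : ∀ v ∈ P.support, v ∈ C₂.support → v = b₂) :
    ∃ ε : ℝ, 0 < ε ∧
      LPFeasible G (fun e =>
        (if e ∈ M then (1 : ℝ) else 0) +
        (if e ∈ C₁.edges ∨ e ∈ C₂.edges then (if e ∈ M then -ε else ε) else 0) +
        (if e ∈ P.edges then (if e ∈ M then -(2 * ε) else 2 * ε) else 0)) ∧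
      LPval G w (fun e => if e ∈ M then (1 : ℝ) else 0) <
        LPval G w (fun e =>
          (if e ∈ M then (1 : ℝ) else 0) +
          (if e ∈ C₁.edges ∨ e ∈ C₂.edges then (if e ∈ M then -ε else ε) else 0) +
          (if e ∈ P.edges then (if e ∈ M then -(2 * ε) else 2 * ε) else 0)) := by
  classical
  obtain ⟨hB1, hB2, hPpath, hAlt, hhead, hlast⟩ := hBP
  have hC1cyc : C₁.IsCycle := hB1.1
  have hC2cyc : C₂.IsCycle := hB2.1
  have hnd1 : C₁.edges.Nodup := hC1cyc.edges_nodup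
  have hnd2 : C₂.edges.Nodup := hC2cyc.edges_nodup
  have hndP : P.edges.Nodup := hPpath.edges_nodup
  have hsub1 : ∀ e ∈ C₁.edges, e ∈ G.edgeSet := fun e he => C₁.edges_subset_edgeSet he
  have hsub2 : ∀ e ∈ C₂.edges, e ∈ G.edgeSet := fun e he => C₂.edges_subset_edgeSet he
  have hsubP : ∀ e ∈ P.edges, e ∈ G.edgeSet := fun e he => P.edges_subset_edgeSet he
  have hb12 : b₁ ≠ b₂ := fun h => hdisj b₁ C₁.start_mem_support (h ▸ C₂.start_mem_support)
  have hd12 : ∀ e, e ∈ C₁.edges → e ∉ C₂.edges := by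
    intro e
    induction e using Sym2.inductionOn with
    | hf x y =>
      intro h1 h2
      exact hdisj x (C₁.fst_mem_support_of_mem_edges h1) (C₂.fst_mem_support_of_mem_edges h2)
  have hdP1 : ∀ e, e ∈ P.edges → e ∉ C₁.edges := by
    intro e
    induction e using Sym2.inductionOn with
    | hf x y =>
      intro hp hc
      have hx := hPC₁ x (P.fst_mem_support_of_mem_edges hp) (C₁.fst_mem_support_of_mem_edges hc)
      have hy := hPC₁ y (P.snd_mem_support_of_mem_edges hp) (C₁.snd_mem_support_of_mem_edges hc)
      have hadj : G.Adj x y := (G.mem_edgeSet).mp (hsubP _ hp)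
      exact hadj.ne (hx.trans hy.symm)
  have hdP2 : ∀ e, e ∈ P.edges → e ∉ C₂.edges := by
    intro e
    induction e using Sym2.inductionOn with
    | hf x y =>
      intro hp hc
      have hx := hPC₂ x (P.fst_mem_support_of_mem_edges hp) (C₂.fst_mem_support_of_mem_edges hc)
      have hy := hPC₂ y (P.snd_mem_support_of_mem_edges hp) (C₂.snd_mem_support_of_mem_edges hc)
      have hadj : G.Adj x y := (G.mem_edgeSet).mp (hsubP _ hp)
      exact hadj.ne (hx.trans hy.symm)
  refine ⟨1/3, by norm_num, ⟨?_, ?_, ?_⟩, ?_⟩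
  · -- nonnegativity
    intro e
    by_cases h0 : e ∈ M <;> by_cases h1 : (e ∈ C₁.edges ∨ e ∈ C₂.edges) <;>
      by_cases h2 : e ∈ P.edges <;> simp [h0, h1, h2] <;> norm_num
  · -- support
    intro e he
    have h0 : e ∉ M := fun h => he (hM.1 h)
    have h1 : e ∉ C₁.edges := fun h => he (hsub1 e h)
    have h2 : e ∉ C₂.edges := fun h => he (hsub2 e h)
    have h3 : e ∉ P.edges := fun h => he (hsubP e h)
    simp [h0, h1, h2, h3]
  · -- degree constraints
    intro i
    set F := G.edgeFinset.filter (fun e => i ∈ e) with hF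
    set n1 := C₁.edges.countP (fun e => decide (i ∈ e)) with hn1d
    set m1 := C₁.edges.countP (fun e => decide (i ∈ e ∧ e ∈ M)) with hm1d
    set n2 := C₂.edges.countP (fun e => decide (i ∈ e)) with hn2d
    set m2 := C₂.edges.countP (fun e => decide (i ∈ e ∧ e ∈ M)) with hm2d
    set nP := P.edges.countP (fun e => decide (i ∈ e)) with hnPd
    set mP := P.edges.countP (fun e => decide (i ∈ e ∧ e ∈ M)) with hmPd
    have himp : ∀ (l : List (Sym2 V)), l.countP (fun e => decide (i ∈ e ∧ e ∈ M))
        ≤ l.countP (fun e => decide (i ∈ e)) := fun l =>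
      List.countP_mono_left (fun e _ h => by
        simp only [decide_eq_true_eq] at h ⊢; exact h.1)
    have hmn1 : m1 ≤ n1 := himp _
    have hmn2 : m2 ≤ n2 := himp _
    have hmnP : mP ≤ nP := himp _
    have hkey : n1 + n2 + 2 * nP = 2 * (m1 + m2) + 4 * mP := by
      by_cases hi1 : i ∈ C₁.support
      · have hn2' : n2 = 0 := BBP.countP_edges_zero C₂ (hdisj i hi1)
        have hm2' : m2 = 0 := BBP.countP_edges_zero_M C₂ (hdisj i hi1)
        by_cases hib : i = b₁
        · subst hib
          have hn1' : n1 = 2 := BBP.cycle_countP_edges hC1cyc C₁.start_mem_support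
          have hm1' : m1 = 0 := BBP.cycle_M_count_base hB1
          have hnP' : nP = 1 := by
            have h := BBP.path_countP_edges hPpath P.start_mem_support
            rw [if_pos rfl, if_neg hb12] at h
            omega
          have hmP' : mP = 1 := BBP.path_M_count_start hM hPpath hb12 hhead
          omega
        · have hn1' : n1 = 2 := BBP.cycle_countP_edges hC1cyc hi1
          have hm1' : m1 = 1 := BBP.cycle_M_count hM hB1 hi1 hib
          have hiP : i ∉ P.support := fun h => hib (hPC₁ i h hi1)
          have hnP' : nP = 0 := BBP.countP_edges_zero P hiP
          have hmP' : mP = 0 := BBP.countP_edges_zero_M P hiP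
          omega
      · have hn1' : n1 = 0 := BBP.countP_edges_zero C₁ hi1
        have hm1' : m1 = 0 := BBP.countP_edges_zero_M C₁ hi1
        by_cases hi2 : i ∈ C₂.support
        · by_cases hib : i = b₂
          · subst hib
            have hn2' : n2 = 2 := BBP.cycle_countP_edges hC2cyc C₂.start_mem_support
            have hm2' : m2 = 0 := BBP.cycle_M_count_base hB2
            have hnP' : nP = 1 := by
              have h := BBP.path_countP_edges hPpath P.end_mem_support
              rw [if_neg (fun hh => hb12 hh.symm), if_pos rfl] at h
              omega
            have hmP' : mP = 1 := BBP.path_M_count_end hM hPpath hb12 hlast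
            omega
          · have hn2' : n2 = 2 := BBP.cycle_countP_edges hC2cyc hi2
            have hm2' : m2 = 1 := BBP.cycle_M_count hM hB2 hi2 hib
            have hiP : i ∉ P.support := fun h => hib (hPC₂ i h hi2)
            have hnP' : nP = 0 := BBP.countP_edges_zero P hiP
            have hmP' : mP = 0 := BBP.countP_edges_zero_M P hiP
            omega
        · have hn2' : n2 = 0 := BBP.countP_edges_zero C₂ hi2
          have hm2' : m2 = 0 := BBP.countP_edges_zero_M C₂ hi2
          by_cases hiP : i ∈ P.support
          · have hib1 : i ≠ b₁ := fun h => hi1 (h ▸ C₁.start_mem_support)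
            have hib2 : i ≠ b₂ := fun h => hi2 (h ▸ C₂.start_mem_support)
            have hnP' : nP = 2 := by
              have h := BBP.path_countP_edges hPpath hiP
              rw [if_neg hib1, if_neg hib2] at h
              omega
            have hmP' : mP = 1 :=
              BBP.path_M_count_internal hM hPpath hAlt hhead hiP hib1 hib2
            omega
          · have hnP' : nP = 0 := BBP.countP_edges_zero P hiP
            have hmP' : mP = 0 := BBP.countP_edges_zero_M P hiP
            omega
    -- Finset cardinalities
    have hdisjF : Disjoint (F.filter (fun e => e ∈ C₁.edges)) (F.filter (fun e => e ∈ C₂.edges)) := by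
      rw [Finset.disjoint_left]
      intro e h1 h2
      exact hd12 e (Finset.mem_filter.mp h1).2 (Finset.mem_filter.mp h2).2
    have hdisjFM : Disjoint (F.filter (fun e => e ∈ C₁.edges ∧ e ∈ M))
        (F.filter (fun e => e ∈ C₂.edges ∧ e ∈ M)) := by
      rw [Finset.disjoint_left]
      intro e h1 h2
      exact hd12 e (Finset.mem_filter.mp h1).2.1 (Finset.mem_filter.mp h2).2.1
    have hA : (F.filter (fun e => e ∈ C₁.edges ∨ e ∈ C₂.edges)).card = n1 + n2 := by
      rw [Finset.filter_or, Finset.card_union_of_disjoint hdisjF,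
        BBP.card_F_inter_list hnd1 hsub1 i, BBP.card_F_inter_list hnd2 hsub2 i]
    have hAM : ((F.filter (fun e => e ∈ C₁.edges ∨ e ∈ C₂.edges)).filter (fun e => e ∈ M)).card
        = m1 + m2 := by
      rw [Finset.filter_filter]
      have heq : F.filter (fun e => (e ∈ C₁.edges ∨ e ∈ C₂.edges) ∧ e ∈ M)
          = F.filter (fun e => (e ∈ C₁.edges ∧ e ∈ M) ∨ (e ∈ C₂.edges ∧ e ∈ M)) := by
        apply Finset.filter_congr
        intro e _
        tauto
      rw [heq, Finset.filter_or, Finset.card_union_of_disjoint hdisjFM,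
        BBP.card_F_inter_list_M hnd1 hsub1 i, BBP.card_F_inter_list_M hnd2 hsub2 i]
    have hB : (F.filter (fun e => e ∈ P.edges)).card = nP :=
      BBP.card_F_inter_list hndP hsubP i
    have hBM : ((F.filter (fun e => e ∈ P.edges)).filter (fun e => e ∈ M)).card = mP := by
      rw [Finset.filter_filter]
      exact BBP.card_F_inter_list_M hndP hsubP i
    have hANM : ((F.filter (fun e => e ∈ C₁.edges ∨ e ∈ C₂.edges)).filter
        (fun e => ¬ e ∈ M)).card = (n1 + n2) - (m1 + m2) := by
      have := Finset.card_filter_add_card_filter_not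
        (s := F.filter (fun e => e ∈ C₁.edges ∨ e ∈ C₂.edges)) (p := fun e => e ∈ M)
      omega
    have hBNM : ((F.filter (fun e => e ∈ P.edges)).filter (fun e => ¬ e ∈ M)).card
        = nP - mP := by
      have := Finset.card_filter_add_card_filter_not
        (s := F.filter (fun e => e ∈ P.edges)) (p := fun e => e ∈ M)
      omega
    have hcard0 : (F.filter (fun e => e ∈ M)).card ≤ 1 := by
      apply Finset.card_le_one.mpr
      intro a ha b hb
      rw [Finset.mem_filter] at ha hb
      rw [hF, Finset.mem_filter] at *
      by_contra hab
      exact hM.2 a ha.2 b hb.2 hab i ha.1.2 hb.1.2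
    have htot : ∑ e ∈ F, ((if e ∈ M then (1:ℝ) else 0) +
        (if e ∈ C₁.edges ∨ e ∈ C₂.edges then (if e ∈ M then -(1/3 : ℝ) else (1/3:ℝ)) else 0) +
        (if e ∈ P.edges then (if e ∈ M then -(2 * (1/3 : ℝ)) else 2 * (1/3:ℝ)) else 0))
        = ((F.filter (fun e => e ∈ M)).card : ℝ)
          + (((m1 + m2 : ℕ) : ℝ) * (-(1/3)) + (((n1 + n2) - (m1 + m2) : ℕ) : ℝ) * (1/3))
          + ((mP : ℝ) * (-(2 * (1/3))) + ((nP - mP : ℕ) : ℝ) * (2 * (1/3))) := by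
      rw [Finset.sum_add_distrib, Finset.sum_add_distrib, ← Finset.sum_filter,
        ← Finset.sum_filter, ← Finset.sum_filter, Finset.sum_ite, Finset.sum_ite,
        Finset.sum_const, Finset.sum_const, Finset.sum_const, Finset.sum_const,
        Finset.sum_const, hAM, hANM, hBM, hBNM]
      push_cast [nsmul_eq_mul]
      ring
    refine le_trans (le_of_eq htot) ?_
    have hc0 : ((F.filter (fun e => e ∈ M)).card : ℝ) ≤ 1 := by exact_mod_cast hcard0
    have hs1 : (((n1 + n2) - (m1 + m2) : ℕ) : ℝ)
        = ((n1 : ℝ) + n2) - ((m1 : ℝ) + m2) := by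
      rw [Nat.cast_sub (by omega)]
      push_cast
      ring
    have hs2 : ((nP - mP : ℕ) : ℝ) = (nP : ℝ) - mP := by
      rw [Nat.cast_sub hmnP]
    have hkeyR : (n1 : ℝ) + n2 + 2 * nP = 2 * ((m1 : ℝ) + m2) + 4 * mP := by
      exact_mod_cast hkey
    rw [hs1, hs2]
    push_cast
    linarith
  · -- objective value increases
    have hsumlist : ∀ (l : List (Sym2 V)), l.Nodup → ∀ (a b : ℝ),
        (∑ e ∈ l.toFinset, if e ∈ M then w e * a else w e * b)
          = a * wsum w (l.filter (· ∈ M)) + b * wsum w (l.filter (· ∉ M)) := by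
      intro l hnd a b
      have hfn : (fun e => if e ∈ M then w e * a else w e * b)
          = (fun e => w e * (if e ∈ M then a else b)) := by
        funext e
        by_cases h : e ∈ M <;> simp [h]
      calc (∑ e ∈ l.toFinset, if e ∈ M then w e * a else w e * b)
          = ∑ e ∈ l.toFinset, w e * (if e ∈ M then a else b) := by rw [hfn]
        _ = _ := by
            rw [List.sum_toFinset _ hnd]
            exact BBP.list_sum_split w M a b l
    have hdomA : G.edgeFinset.filter (fun e => e ∈ C₁.edges ∨ e ∈ C₂.edges)
        = C₁.edges.toFinset ∪ C₂.edges.toFinset := by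
      ext e
      simp only [Finset.mem_filter, Finset.mem_union, List.mem_toFinset,
        SimpleGraph.mem_edgeFinset]
      constructor
      · rintro ⟨-, h⟩; exact h
      · rintro h
        refine ⟨?_, h⟩
        rcases h with h | h
        exacts [hsub1 e h, hsub2 e h]
    have hdomB : G.edgeFinset.filter (fun e => e ∈ P.edges) = P.edges.toFinset := by
      ext e
      simp only [Finset.mem_filter, List.mem_toFinset, SimpleGraph.mem_edgeFinset]
      exact ⟨fun h => h.2, fun h => ⟨hsubP e h, h⟩⟩
    have hdisj12 : Disjoint C₁.edges.toFinset C₂.edges.toFinset := by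
      rw [Finset.disjoint_left]
      intro e h1 h2
      exact hd12 e (List.mem_toFinset.mp h1) (List.mem_toFinset.mp h2)
    have hmain : ∑ e ∈ G.edgeFinset, w e * ((if e ∈ M then (1:ℝ) else 0) +
          (if e ∈ C₁.edges ∨ e ∈ C₂.edges then (if e ∈ M then -(1/3 : ℝ) else (1/3:ℝ)) else 0) +
          (if e ∈ P.edges then (if e ∈ M then -(2 * (1/3 : ℝ)) else 2 * (1/3:ℝ)) else 0))
        = (∑ e ∈ G.edgeFinset, w e * (if e ∈ M then (1:ℝ) else 0))
          + ((-(1/3)) * wsum w (C₁.edges.filter (· ∈ M)) + (1/3) * wsum w (C₁.edges.filter (· ∉ M))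
            + ((-(1/3)) * wsum w (C₂.edges.filter (· ∈ M)) + (1/3) * wsum w (C₂.edges.filter (· ∉ M))))
          + ((-(2 * (1/3))) * wsum w (P.edges.filter (· ∈ M))
            + (2 * (1/3)) * wsum w (P.edges.filter (· ∉ M))) := by
      have e1 : ∑ e ∈ G.edgeFinset, w e * ((if e ∈ M then (1:ℝ) else 0) +
            (if e ∈ C₁.edges ∨ e ∈ C₂.edges then (if e ∈ M then -(1/3 : ℝ) else (1/3:ℝ)) else 0) +
            (if e ∈ P.edges then (if e ∈ M then -(2 * (1/3 : ℝ)) else 2 * (1/3:ℝ)) else 0))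
          = (∑ e ∈ G.edgeFinset, w e * (if e ∈ M then (1:ℝ) else 0))
            + (∑ e ∈ G.edgeFinset, w e *
              (if e ∈ C₁.edges ∨ e ∈ C₂.edges then (if e ∈ M then -(1/3 : ℝ) else (1/3:ℝ)) else 0))
            + (∑ e ∈ G.edgeFinset, w e *
              (if e ∈ P.edges then (if e ∈ M then -(2 * (1/3 : ℝ)) else 2 * (1/3:ℝ)) else 0)) := by
        simp only [mul_add]
        rw [Finset.sum_add_distrib, Finset.sum_add_distrib]
      have e2 : ∑ e ∈ G.edgeFinset, w e *
            (if e ∈ C₁.edges ∨ e ∈ C₂.edges then (if e ∈ M then -(1/3 : ℝ) else (1/3:ℝ)) else 0)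
          = (-(1/3)) * wsum w (C₁.edges.filter (· ∈ M)) + (1/3) * wsum w (C₁.edges.filter (· ∉ M))
            + ((-(1/3)) * wsum w (C₂.edges.filter (· ∈ M)) + (1/3) * wsum w (C₂.edges.filter (· ∉ M))) := by
        simp only [mul_ite, mul_zero]
        rw [← Finset.sum_filter, hdomA, Finset.sum_union hdisj12,
          hsumlist C₁.edges hnd1 (-(1/3)) (1/3), hsumlist C₂.edges hnd2 (-(1/3)) (1/3)]
      have e3 : ∑ e ∈ G.edgeFinset, w e *
            (if e ∈ P.edges then (if e ∈ M then -(2 * (1/3 : ℝ)) else 2 * (1/3:ℝ)) else 0)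
          = (-(2 * (1/3))) * wsum w (P.edges.filter (· ∈ M))
            + (2 * (1/3)) * wsum w (P.edges.filter (· ∉ M)) := by
        simp only [mul_ite, mul_zero]
        rw [← Finset.sum_filter, hdomB, hsumlist P.edges hndP (-(2 * (1/3))) (2 * (1/3))]
      rw [e1, e2, e3]
    show LPval G w _ < LPval G w _
    unfold LPval
    refine lt_of_lt_of_le ?_ (le_of_eq hmain.symm)
    have hbad' := hbad
    unfold BadBlossomPair at hbad'
    linarith
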